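/- Fix Σ, X_std, X_ext. There exist a true parameter θ⋆ ∈ ℝ^d and a constant c > 0 such that L_std(θ̂_aug) − L_std(θ̂_std) ≥ c if and only if there exist vectors v in the range of Π⊥_std Π_aug and w in the range of Π⊥_aug such that wᵀΣv ≠ 0. -/

import Mathlib

open Matrix BigOperators

/-- Standard (population) error of `θ` w.r.t. covariance `S` and true parameter `θstar`:
`(θ − θ⋆)ᵀ Σ (θ − θ⋆)`. -/
def Lstd {d : ℕ} (S : Matrix (Fin d) (Fin d) ℝ) (θstar θ : Fin d → ℝ) : ℝ :=
  (θ - θstar) ⬝ᵥ S.mulVec (θ - θstar)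

/-- `θ` is the minimum Euclidean-norm solution of the constraint `C`. -/
def IsMinNormInterp {d : ℕ} (C : (Fin d → ℝ) → Prop) (θ : Fin d → ℝ) : Prop :=
  C θ ∧ ∀ θ', C θ' → θ ⬝ᵥ θ ≤ θ' ⬝ᵥ θ'

/-- `P` is the orthogonal projection matrix onto `Null(X)`:
symmetric, idempotent, range contained in `Null(X)`, and fixing `Null(X)`. -/
def IsOrthProjNull {n d : ℕ} (X : Matrix (Fin n) (Fin d) ℝ)
    (P : Matrix (Fin d) (Fin d) ℝ) : Prop :=
  Pᵀ = P ∧ P * P = P ∧ (∀ v, X.mulVec (P.mulVec v) = 0) ∧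
    (∀ v, X.mulVec v = 0 → P.mulVec v = v)

/-- `P` is the orthogonal projection matrix onto `Null(X1) ∩ Null(X2)`. -/
def IsOrthProjNull2 {n m d : ℕ} (X1 : Matrix (Fin n) (Fin d) ℝ)
    (X2 : Matrix (Fin m) (Fin d) ℝ) (P : Matrix (Fin d) (Fin d) ℝ) : Prop :=
  Pᵀ = P ∧ P * P = P ∧ (∀ v, X1.mulVec (P.mulVec v) = 0 ∧ X2.mulVec (P.mulVec v) = 0) ∧
    (∀ v, X1.mulVec v = 0 → X2.mulVec v = 0 → P.mulVec v = v)


section AuxCE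
variable {d : ℕ}

private lemma ce_dot_self_nonneg (x : Fin d → ℝ) : 0 ≤ x ⬝ᵥ x :=
  Finset.sum_nonneg fun _ _ => mul_self_nonneg _

private lemma ce_dot_expand (x y : Fin d → ℝ) :
    (x + y) ⬝ᵥ (x + y) = x ⬝ᵥ x + 2 * (x ⬝ᵥ y) + y ⬝ᵥ y := by
  rw [add_dotProduct, dotProduct_add, dotProduct_add, dotProduct_comm y x]; ring

variable (P : Matrix (Fin d) (Fin d) ℝ) (N : (Fin d → ℝ) → Prop)

private lemma ce_proj_orth (hsym : Pᵀ = P) (hidem : P * P = P)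
    (hfix : ∀ v, N v → P.mulVec v = v) (θs v : Fin d → ℝ) (hv : N v) :
    ((1 - P).mulVec θs) ⬝ᵥ v = 0 := by
  have h1 : P.mulVec ((1 - P).mulVec θs) = 0 := by
    rw [mulVec_mulVec, mul_sub, mul_one, hidem, sub_self, zero_mulVec]
  calc ((1 - P).mulVec θs) ⬝ᵥ v = ((1 - P).mulVec θs) ⬝ᵥ (P.mulVec v) := by
        rw [hfix v hv]
    _ = (Pᵀ.mulVec ((1 - P).mulVec θs)) ⬝ᵥ v := by
        rw [Matrix.dotProduct_mulVec, Matrix.mulVec_transpose]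
    _ = 0 := by rw [hsym, h1, zero_dotProduct]

private lemma ce_minNorm_spec (hsym : Pᵀ = P) (hidem : P * P = P)
    (hrange : ∀ v, N (P.mulVec v)) (hfix : ∀ v, N v → P.mulVec v = v)
    (θs : Fin d → ℝ) :
    IsMinNormInterp (fun θ => N (θ - θs)) ((1 - P).mulVec θs) := by
  constructor
  · have : (1 - P).mulVec θs - θs = P.mulVec (-θs) := by
      rw [sub_mulVec, one_mulVec, mulVec_neg]; abel
    show N ((1 - P) *ᵥ θs - θs)
    rw [this]; exact hrange _
  · intro θ' hθ'
    set θ0 := (1 - P).mulVec θs with hθ0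
    have hN : N (θ' - θ0) := by
      have : θ' - θ0 = P.mulVec (θ' - θ0) := by
        have h1 : P.mulVec θ0 = 0 := by
          rw [hθ0, mulVec_mulVec, mul_sub, mul_one, hidem, sub_self, zero_mulVec]
        have h2 : P.mulVec (θ' - θs) = θ' - θs := hfix _ hθ'
        rw [mulVec_sub, h1, sub_zero]
        have : θ' = (θ' - θs) + θs := by abel
        rw [this, mulVec_add, h2, hθ0, sub_mulVec, one_mulVec]; abel
      rw [this]; exact hrange _
    have horth : θ0 ⬝ᵥ (θ' - θ0) = 0 := ce_proj_orth P N hsym hidem hfix θs _ hN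
    have hexp : θ' ⬝ᵥ θ' = θ0 ⬝ᵥ θ0 + 2 * (θ0 ⬝ᵥ (θ' - θ0)) + (θ' - θ0) ⬝ᵥ (θ' - θ0) := by
      have := ce_dot_expand θ0 (θ' - θ0)
      rwa [add_sub_cancel] at this
    rw [hexp, horth]
    have := ce_dot_self_nonneg (θ' - θ0)
    linarith

private lemma ce_minNorm_unique (hsym : Pᵀ = P) (hidem : P * P = P)
    (hrange : ∀ v, N (P.mulVec v)) (hfix : ∀ v, N v → P.mulVec v = v)
    (θs θ : Fin d → ℝ) (h : IsMinNormInterp (fun θ => N (θ - θs)) θ) :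
    θ = (1 - P).mulVec θs := by
  set θ0 := (1 - P).mulVec θs with hθ0
  have hspec := ce_minNorm_spec P N hsym hidem hrange hfix θs
  have hle : θ ⬝ᵥ θ ≤ θ0 ⬝ᵥ θ0 := h.2 _ hspec.1
  have hN : N (θ - θ0) := by
    have : θ - θ0 = P.mulVec (θ - θ0) := by
      have h1 : P.mulVec θ0 = 0 := by
        rw [hθ0, mulVec_mulVec, mul_sub, mul_one, hidem, sub_self, zero_mulVec]
      have h2 : P.mulVec (θ - θs) = θ - θs := hfix _ h.1
      rw [mulVec_sub, h1, sub_zero]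
      have h3 : θ = (θ - θs) + θs := by abel
      rw [h3, mulVec_add, h2, hθ0, sub_mulVec, one_mulVec]; abel
    rw [this]; exact hrange _
  have horth : θ0 ⬝ᵥ (θ - θ0) = 0 := ce_proj_orth P N hsym hidem hfix θs _ hN
  have hexp : θ ⬝ᵥ θ = θ0 ⬝ᵥ θ0 + 2 * (θ0 ⬝ᵥ (θ - θ0)) + (θ - θ0) ⬝ᵥ (θ - θ0) := by
    have := ce_dot_expand θ0 (θ - θ0)
    rwa [add_sub_cancel] at this
  have hz : (θ - θ0) ⬝ᵥ (θ - θ0) = 0 := by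
    rw [hexp, horth] at hle; linarith [ce_dot_self_nonneg (θ - θ0)]
  exact sub_eq_zero.mp (dotProduct_self_eq_zero.mp hz)

private lemma ce_eq_of_mulVec (A B : Matrix (Fin d) (Fin d) ℝ)
    (h : ∀ v, A.mulVec v = B.mulVec v) : A = B := by
  ext i j
  have := congrFun (h (Pi.single j 1)) i
  rw [mulVec_single, mulVec_single] at this
  simpa using this

end AuxCE

/-- Lemma constructexist, iff part (paper): for fixed `Σ, X_std, X_ext`, there exist a
true parameter and `c > 0` with `L_std(θ̂_aug) − L_std(θ̂_std) ≥ c` if and only if there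
are directions `v` in the range of `Π⊥_std Π_aug` and `w` in the range of `Π⊥_aug` with
`wᵀ Σ v ≠ 0`. -/
theorem augmentation_hurts_iff_cross_term {n m d : ℕ}
    (Xstd : Matrix (Fin n) (Fin d) ℝ) (Xext : Matrix (Fin m) (Fin d) ℝ)
    (S : Matrix (Fin d) (Fin d) ℝ) (hS : S.PosSemidef)
    (Pstd Paug : Matrix (Fin d) (Fin d) ℝ)
    (hPstd : IsOrthProjNull Xstd Pstd)
    (hPaug : IsOrthProjNull2 Xstd Xext Paug) :
    (∃ (θstar θstd θaug : Fin d → ℝ) (c : ℝ), 0 < c ∧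
        IsMinNormInterp (fun θ => Xstd.mulVec θ = Xstd.mulVec θstar) θstd ∧
        IsMinNormInterp
          (fun θ => Xstd.mulVec θ = Xstd.mulVec θstar ∧ Xext.mulVec θ = Xext.mulVec θstar)
          θaug ∧
        Lstd S θstar θaug - Lstd S θstar θstd ≥ c) ↔
      (∃ u1 u2 : Fin d → ℝ,
        (Paug.mulVec u1) ⬝ᵥ S.mulVec (Pstd.mulVec ((1 - Paug).mulVec u2)) ≠ 0)  := by
  obtain ⟨hs1, hs2, hs3, hs4⟩ := hPstd
  obtain ⟨ha1, ha2, ha3, ha4⟩ := hPaug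
  have hSsym : Sᵀ = S := by have := hS.1; simpa [Matrix.IsHermitian] using this
  have hSnn : ∀ x : Fin d → ℝ, 0 ≤ x ⬝ᵥ S *ᵥ x := fun x => by
    have := hS.dotProduct_mulVec_nonneg x; simpa using this
  -- the aug range/fix hypotheses bundled for N_aug
  set Naug : (Fin d → ℝ) → Prop := fun v => Xstd.mulVec v = 0 ∧ Xext.mulVec v = 0 with hNaug
  have haugrange : ∀ v, Naug (Paug.mulVec v) := fun v => ha3 v
  have haugfix : ∀ v, Naug v → Paug.mulVec v = v := fun v hv => ha4 v hv.1 hv.2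
  set Nstd : (Fin d → ℝ) → Prop := fun v => Xstd.mulVec v = 0 with hNstd
  -- predicate translations
  have hCstd : ∀ θstar : Fin d → ℝ,
      (fun θ => Xstd.mulVec θ = Xstd.mulVec θstar) = (fun θ => Nstd (θ - θstar)) := by
    intro θstar; funext θ
    simp only [hNstd, mulVec_sub, sub_eq_zero]
  have hCaug : ∀ θstar : Fin d → ℝ,
      (fun θ => Xstd.mulVec θ = Xstd.mulVec θstar ∧ Xext.mulVec θ = Xext.mulVec θstar)
        = (fun θ => Naug (θ - θstar)) := by
    intro θstar; funext θ
    simp only [hNaug, mulVec_sub, sub_eq_zero]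
  -- Pstd * Paug = Paug and Paug * Pstd = Paug
  have hPsPa : Pstd * Paug = Paug := by
    apply ce_eq_of_mulVec
    intro v
    rw [← mulVec_mulVec]
    exact hs4 _ (ha3 v).1
  have hPaPs : Paug * Pstd = Paug := by
    have := congrArg Matrix.transpose hPsPa
    rw [Matrix.transpose_mul, hs1, ha1] at this
    exact this
  -- error difference formula
  have hdiff : ∀ θstar : Fin d → ℝ,
      Lstd S θstar ((1 - Paug).mulVec θstar) - Lstd S θstar ((1 - Pstd).mulVec θstar)
        = -(2 * ((Paug.mulVec θstar) ⬝ᵥ S.mulVec (Pstd.mulVec ((1 - Paug).mulVec θstar))))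
          - (Pstd.mulVec ((1 - Paug).mulVec θstar)) ⬝ᵥ
              S.mulVec (Pstd.mulVec ((1 - Paug).mulVec θstar)) := by
    intro θstar
    set a := Paug.mulVec θstar with hadef
    set b := Pstd.mulVec ((1 - Paug).mulVec θstar) with hbdef
    have hsplit : Pstd.mulVec θstar = a + b := by
      have h1 : θstar = Paug.mulVec θstar + (1 - Paug).mulVec θstar := by
        rw [sub_mulVec, one_mulVec]; abel
      calc Pstd.mulVec θstar
          = Pstd.mulVec (Paug.mulVec θstar + (1 - Paug).mulVec θstar) := by rw [← h1]
        _ = Pstd.mulVec (Paug.mulVec θstar) + b := by rw [mulVec_add]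
        _ = a + b := by
            rw [mulVec_mulVec, hPsPa]
    have hLa : Lstd S θstar ((1 - Paug).mulVec θstar) = a ⬝ᵥ S.mulVec a := by
      unfold Lstd
      have : (1 - Paug).mulVec θstar - θstar = -a := by
        rw [sub_mulVec, one_mulVec, hadef]; abel
      rw [this, mulVec_neg, neg_dotProduct, dotProduct_neg, neg_neg]
    have hLs : Lstd S θstar ((1 - Pstd).mulVec θstar) = (a + b) ⬝ᵥ S.mulVec (a + b) := by
      unfold Lstd
      have : (1 - Pstd).mulVec θstar - θstar = -(a + b) := by
        rw [sub_mulVec, one_mulVec, ← hsplit]; abel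
      rw [this, mulVec_neg, neg_dotProduct, dotProduct_neg, neg_neg]
    have hcross : b ⬝ᵥ S.mulVec a = a ⬝ᵥ S.mulVec b := by
      rw [Matrix.dotProduct_mulVec, ← Matrix.mulVec_transpose, hSsym, dotProduct_comm]
    rw [hLa, hLs, mulVec_add, dotProduct_add, add_dotProduct, add_dotProduct, hcross]
    ring
  constructor
  · rintro ⟨θstar, θstd, θaug, c, hc, hstd, haug, hge⟩
    rw [hCstd θstar] at hstd
    rw [hCaug θstar] at haug
    have hθstd : θstd = (1 - Pstd).mulVec θstar :=
      ce_minNorm_unique Pstd Nstd hs1 hs2 hs3 hs4 θstar θstd hstd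
    have hθaug : θaug = (1 - Paug).mulVec θstar :=
      ce_minNorm_unique Paug Naug ha1 ha2 haugrange haugfix θstar θaug haug
    refine ⟨θstar, θstar, ?_⟩
    intro hzero
    rw [hθstd, hθaug, hdiff θstar, hzero] at hge
    have := hSnn (Pstd.mulVec ((1 - Paug).mulVec θstar))
    linarith
  · rintro ⟨u1, u2, hcross⟩
    set a0 := Paug.mulVec u1 with ha0
    set b0 := Pstd.mulVec ((1 - Paug).mulVec u2) with hb0
    set s := a0 ⬝ᵥ S.mulVec b0 with hsdef
    set q := b0 ⬝ᵥ S.mulVec b0 with hqdef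
    set t : ℝ := -(q + 1) / (2 * s) with htdef
    set θstar := t • a0 + b0 with hθstar
    have hPaA : Paug.mulVec a0 = a0 := by
      rw [ha0, mulVec_mulVec, ha2]
    have hPaB : Paug.mulVec b0 = 0 := by
      rw [hb0, mulVec_mulVec, hPaPs, mulVec_mulVec, mul_sub, mul_one, ha2, sub_self,
        zero_mulVec]
    have hPa : Paug.mulVec θstar = t • a0 := by
      rw [hθstar, mulVec_add, mulVec_smul, hPaA, hPaB, add_zero]
    have honemPa : (1 - Paug).mulVec θstar = b0 := by
      rw [sub_mulVec, one_mulVec, hPa, hθstar]; abel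
    have hPsB : Pstd.mulVec b0 = b0 := by
      rw [hb0, mulVec_mulVec, hs2]
    have hb : Pstd.mulVec ((1 - Paug).mulVec θstar) = b0 := by
      rw [honemPa, hPsB]
    refine ⟨θstar, (1 - Pstd).mulVec θstar, (1 - Paug).mulVec θstar, 1, one_pos, ?_, ?_, ?_⟩
    · rw [hCstd θstar]
      exact ce_minNorm_spec Pstd Nstd hs1 hs2 hs3 hs4 θstar
    · rw [hCaug θstar]
      exact ce_minNorm_spec Paug Naug ha1 ha2 haugrange haugfix θstar
    · rw [hdiff θstar, hPa, hb]
      have hcalc : (t • a0) ⬝ᵥ S.mulVec b0 = t * s := by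
        rw [smul_dotProduct]; rfl
      rw [hcalc, htdef]
      have hs0 : s ≠ 0 := hcross
      have : -(2 * (-(q + 1) / (2 * s) * s)) - q = 1 := by
        field_simp
        ring
      rw [hqdef] at this
      linarith [this.ge, this.le]
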